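/- Let Y₁,…,Y_n be i.i.d. real random variables, let φ_ε : ℝ → ℂ be continuous and nowhere vanishing, let K : ℝ → ℝ be integrable with Fourier transform φ_K, let h > 0, and assume t ↦ t·φ_K(th)/φ_ε(t) is integrable. Define D̂(x) = (2π)⁻¹ ∫_ℝ (−it) exp(−itx) φ_K(th) φ̂_Y(t)/φ_ε(t) dt (the derivative of the deconvolution density estimator). Then E[ sup_{x ∈ ℝ} |D̂(x) − E D̂(x)|² ] ≤ (2π)⁻² n⁻¹ ( ∫_ℝ |t| · |φ_K(th)|/|φ_ε(t)| dt )². -/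

import Mathlib

open MeasureTheory ProbabilityTheory

lemma bdd_integrable {Ω : Type*} [MeasureSpace Ω] [IsProbabilityMeasure (ℙ : Measure Ω)]
    {F : Ω → ℝ} (hF : AEStronglyMeasurable F ℙ) {C : ℝ} (hC : ∀ ω, |F ω| ≤ C) :
    Integrable F ℙ :=
  (integrable_const C).mono' hF (ae_of_all _ (by simpa [Real.norm_eq_abs] using hC))

lemma bdd_memLp {Ω : Type*} [MeasureSpace Ω] [IsProbabilityMeasure (ℙ : Measure Ω)]
    {F : Ω → ℝ} (hF : AEStronglyMeasurable F ℙ) {C : ℝ} (hC : ∀ ω, |F ω| ≤ C) :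
    MemLp F 2 ℙ :=
  (memLp_top_of_bound hF C (ae_of_all _ (by simpa [Real.norm_eq_abs] using hC))).mono_exponent le_top

lemma avg_var_le {Ω : Type*} [MeasureSpace Ω] [IsProbabilityMeasure (ℙ : Measure Ω)]
    (n : ℕ) (hn : 1 ≤ n) (Y : Fin n → Ω → ℝ)
    (hmeas : ∀ i, Measurable (Y i))
    (hindep : iIndepFun Y ℙ)
    (f g : ℝ → ℝ) (hf : Measurable f) (hg : Measurable g)
    (hfb : ∀ x, |f x| ≤ 1) (hgb : ∀ x, |g x| ≤ 1)
    (hfg : ∀ x, f x ^ 2 + g x ^ 2 = 1) :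
    (∫ ω, ((n:ℝ)⁻¹ * ∑ i, f (Y i ω) - ∫ ω', (n:ℝ)⁻¹ * ∑ i, f (Y i ω') ∂ℙ) ^ 2 ∂ℙ)
    + (∫ ω, ((n:ℝ)⁻¹ * ∑ i, g (Y i ω) - ∫ ω', (n:ℝ)⁻¹ * ∑ i, g (Y i ω') ∂ℙ) ^ 2 ∂ℙ)
      ≤ (n:ℝ)⁻¹ := by
  have hn0 : (0:ℝ) < (n:ℝ) := by exact_mod_cast hn
  -- generic: for a bounded measurable F, the centered second moment of the average
  have key : ∀ F : ℝ → ℝ, Measurable F → (∀ x, |F x| ≤ 1) →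
      (∫ ω, ((n:ℝ)⁻¹ * ∑ i, F (Y i ω) - ∫ ω', (n:ℝ)⁻¹ * ∑ i, F (Y i ω') ∂ℙ) ^ 2 ∂ℙ)
        = ((n:ℝ)⁻¹)^2 * ∑ i : Fin n, variance (fun ω => F (Y i ω)) ℙ := by
    intro F hF hFb
    set X : Fin n → Ω → ℝ := fun i ω => F (Y i ω) with hX
    have hXm : ∀ i, Measurable (X i) := fun i => hF.comp (hmeas i)
    have hXLp : ∀ i, MemLp (X i) 2 ℙ := fun i =>
      bdd_memLp (hXm i).aestronglyMeasurable (fun ω => hFb _)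
    set S : Ω → ℝ := ∑ i : Fin n, X i with hS
    have hSLp : MemLp S 2 ℙ := memLp_finset_sum' _ (fun i _ => hXLp i)
    have hALp : MemLp (fun ω => (n:ℝ)⁻¹ * ∑ i, F (Y i ω)) 2 ℙ := by
      have : (fun ω => (n:ℝ)⁻¹ * ∑ i, F (Y i ω)) = (n:ℝ)⁻¹ • S := by
        funext ω; simp [hS, Finset.sum_apply, smul_eq_mul, hX]
      rw [this]; exact hSLp.const_smul _
    have h1 : (∫ ω, ((n:ℝ)⁻¹ * ∑ i, F (Y i ω) - ∫ ω', (n:ℝ)⁻¹ * ∑ i, F (Y i ω') ∂ℙ) ^ 2 ∂ℙ)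
        = variance (fun ω => (n:ℝ)⁻¹ * ∑ i, F (Y i ω)) ℙ := by
      rw [variance_eq_integral hALp.1.aemeasurable]
    rw [h1]
    have h2 : (fun ω => (n:ℝ)⁻¹ * ∑ i, F (Y i ω)) = (n:ℝ)⁻¹ • S := by
      funext ω; simp [hS, Finset.sum_apply, smul_eq_mul, hX]
    rw [h2, variance_smul]
    congr 1
    · exact IndepFun.variance_sum (fun i _ => hXLp i)
        (fun i _ j _ hij => (hindep.indepFun hij).comp hF hF)
  rw [key f hf hfb, key g hg hgb]
  rw [← mul_add, ← Finset.sum_add_distrib]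
  have hsum : ∑ i : Fin n, (variance (fun ω => f (Y i ω)) ℙ + variance (fun ω => g (Y i ω)) ℙ)
      ≤ (n : ℝ) := by
    have : ∀ i : Fin n, variance (fun ω => f (Y i ω)) ℙ + variance (fun ω => g (Y i ω)) ℙ ≤ 1 := by
      intro i
      have hfi := variance_le_expectation_sq (μ := ℙ) (X := fun ω => f (Y i ω))
        ((hf.comp (hmeas i)).aestronglyMeasurable)
      have hgi := variance_le_expectation_sq (μ := ℙ) (X := fun ω => g (Y i ω))
        ((hg.comp (hmeas i)).aestronglyMeasurable)
      have hintf : Integrable (fun ω => f (Y i ω) ^ 2) ℙ :=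
        bdd_integrable ((hf.comp (hmeas i)).pow_const 2).aestronglyMeasurable
          (C := 1) (fun ω => by
            have := hfb (Y i ω); rw [abs_pow]; nlinarith [abs_nonneg (f (Y i ω))])
      have hintg : Integrable (fun ω => g (Y i ω) ^ 2) ℙ :=
        bdd_integrable ((hg.comp (hmeas i)).pow_const 2).aestronglyMeasurable
          (C := 1) (fun ω => by
            have := hgb (Y i ω); rw [abs_pow]; nlinarith [abs_nonneg (g (Y i ω))])
      have hsum1 : (∫ ω, f (Y i ω) ^ 2 ∂ℙ) + (∫ ω, g (Y i ω) ^ 2 ∂ℙ) = 1 := by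
        rw [← integral_add hintf hintg]
        simp only [hfg]
        simp
      calc variance (fun ω => f (Y i ω)) ℙ + variance (fun ω => g (Y i ω)) ℙ
          ≤ (∫ ω, f (Y i ω) ^ 2 ∂ℙ) + (∫ ω, g (Y i ω) ^ 2 ∂ℙ) := by
            refine add_le_add ?_ ?_
            · simpa [Pi.pow_apply] using hfi
            · simpa [Pi.pow_apply] using hgi
        _ = 1 := hsum1
    calc ∑ i : Fin n, (variance (fun ω => f (Y i ω)) ℙ + variance (fun ω => g (Y i ω)) ℙ)
        ≤ ∑ _i : Fin n, (1:ℝ) := Finset.sum_le_sum (fun i _ => this i)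
      _ = (n:ℝ) := by simp
  calc ((n:ℝ)⁻¹)^2 * ∑ i : Fin n, (variance (fun ω => f (Y i ω)) ℙ + variance (fun ω => g (Y i ω)) ℙ)
      ≤ ((n:ℝ)⁻¹)^2 * (n:ℝ) := by
        refine mul_le_mul_of_nonneg_left hsum (by positivity)
    _ = (n:ℝ)⁻¹ := by field_simp

lemma bdd_integrableC {Ω : Type*} [MeasureSpace Ω] [IsProbabilityMeasure (ℙ : Measure Ω)]
    {F : Ω → ℂ} (hF : AEStronglyMeasurable F ℙ) {C : ℝ} (hC : ∀ ω, ‖F ω‖ ≤ C) :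
    Integrable F ℙ :=
  (integrable_const C).mono' hF (ae_of_all _ (by simpa using hC))

lemma norm_sq_complex (z : ℂ) : ‖z‖ ^ 2 = z.re ^ 2 + z.im ^ 2 := by
  rw [Complex.sq_norm, Complex.normSq_apply]; ring

lemma exp_I_re (t y : ℝ) : (Complex.exp (Complex.I * t * y)).re = Real.cos (t * y) := by
  have : Complex.I * t * y = ((t*y : ℝ) : ℂ) * Complex.I := by push_cast; ring
  rw [this, Complex.exp_ofReal_mul_I_re]

lemma exp_I_im (t y : ℝ) : (Complex.exp (Complex.I * t * y)).im = Real.sin (t * y) := by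
  have : Complex.I * t * y = ((t*y : ℝ) : ℂ) * Complex.I := by push_cast; ring
  rw [this, Complex.exp_ofReal_mul_I_im]

lemma empCF_var_le {Ω : Type*} [MeasureSpace Ω] [IsProbabilityMeasure (ℙ : Measure Ω)]
    (n : ℕ) (hn : 1 ≤ n) (Y : Fin n → Ω → ℝ)
    (hmeas : ∀ i, Measurable (Y i))
    (hindep : iIndepFun Y ℙ)
    (hident : ∀ i j, IdentDistrib (Y i) (Y j) ℙ ℙ) (t : ℝ) :
    ∫ ω, ‖(n:ℂ)⁻¹ * (∑ i, Complex.exp (Complex.I * t * Y i ω))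
        - ∫ ω', Complex.exp (Complex.I * t * Y ⟨0, hn⟩ ω') ∂ℙ‖ ^ 2 ∂ℙ ≤ (n:ℝ)⁻¹ := by
  set f : ℝ → ℝ := fun x => Real.cos (t * x) with hfdef
  set g : ℝ → ℝ := fun x => Real.sin (t * x) with hgdef
  have hf : Measurable f := by fun_prop
  have hg : Measurable g := by fun_prop
  have hfb : ∀ x, |f x| ≤ 1 := fun x => Real.abs_cos_le_one _
  have hgb : ∀ x, |g x| ≤ 1 := fun x => Real.abs_sin_le_one _
  have hfg : ∀ x, f x ^ 2 + g x ^ 2 = 1 := fun x => Real.cos_sq_add_sin_sq _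
  have hexp_meas : ∀ i : Fin n, Measurable (fun ω => Complex.exp (Complex.I * t * Y i ω)) := by
    intro i; fun_prop
  have hexp_int : ∀ i : Fin n, Integrable (fun ω => Complex.exp (Complex.I * t * Y i ω)) ℙ := by
    intro i
    refine bdd_integrableC (hexp_meas i).aestronglyMeasurable (C := 1) (fun ω => ?_)
    rw [Complex.norm_exp]
    simp
  -- real part of μc
  have hint_f : ∀ i : Fin n, Integrable (fun ω => f (Y i ω)) ℙ :=
    fun i => bdd_integrable ((hf.comp (hmeas i)).aestronglyMeasurable) (fun ω => hfb _)
  have hint_g : ∀ i : Fin n, Integrable (fun ω => g (Y i ω)) ℙ :=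
    fun i => bdd_integrable ((hg.comp (hmeas i)).aestronglyMeasurable) (fun ω => hgb _)
  have hre : (∫ ω', Complex.exp (Complex.I * t * Y ⟨0, hn⟩ ω') ∂ℙ).re
      = ∫ ω', (n:ℝ)⁻¹ * ∑ i, f (Y i ω') ∂ℙ := by
    have hri := integral_re (hexp_int ⟨0, hn⟩)
    simp only [RCLike.re_to_complex] at hri
    rw [← hri]
    have h1 : ∫ ω', (Complex.exp (Complex.I * t * Y ⟨0, hn⟩ ω')).re ∂ℙ
        = ∫ ω', f (Y ⟨0, hn⟩ ω') ∂ℙ := by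
      congr 1; funext ω'; rw [exp_I_re]
    rw [h1]
    have h2 : ∀ i : Fin n, ∫ ω', f (Y i ω') ∂ℙ = ∫ ω', f (Y ⟨0, hn⟩ ω') ∂ℙ := by
      intro i
      exact ((hident i ⟨0, hn⟩).comp hf).integral_eq
    rw [integral_const_mul, integral_finset_sum _ (fun i _ => hint_f i)]
    simp_rw [h2]
    simp only [Finset.sum_const, Finset.card_univ, Fintype.card_fin, nsmul_eq_mul]
    rw [← mul_assoc, inv_mul_cancel₀ (by exact_mod_cast Nat.one_le_iff_ne_zero.mp hn : (n:ℝ) ≠ 0), one_mul]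
  have him : (∫ ω', Complex.exp (Complex.I * t * Y ⟨0, hn⟩ ω') ∂ℙ).im
      = ∫ ω', (n:ℝ)⁻¹ * ∑ i, g (Y i ω') ∂ℙ := by
    have hii := integral_im (hexp_int ⟨0, hn⟩)
    simp only [RCLike.im_to_complex] at hii
    rw [← hii]
    have h1 : ∫ ω', (Complex.exp (Complex.I * t * Y ⟨0, hn⟩ ω')).im ∂ℙ
        = ∫ ω', g (Y ⟨0, hn⟩ ω') ∂ℙ := by
      congr 1; funext ω'; rw [exp_I_im]
    rw [h1]
    have h2 : ∀ i : Fin n, ∫ ω', g (Y i ω') ∂ℙ = ∫ ω', g (Y ⟨0, hn⟩ ω') ∂ℙ := by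
      intro i
      exact ((hident i ⟨0, hn⟩).comp hg).integral_eq
    rw [integral_const_mul, integral_finset_sum _ (fun i _ => hint_g i)]
    simp_rw [h2]
    simp only [Finset.sum_const, Finset.card_univ, Fintype.card_fin, nsmul_eq_mul]
    rw [← mul_assoc, inv_mul_cancel₀ (by exact_mod_cast Nat.one_le_iff_ne_zero.mp hn : (n:ℝ) ≠ 0), one_mul]
  -- pointwise decomposition
  have hpt : ∀ ω, ‖(n:ℂ)⁻¹ * (∑ i, Complex.exp (Complex.I * t * Y i ω))
        - ∫ ω', Complex.exp (Complex.I * t * Y ⟨0, hn⟩ ω') ∂ℙ‖ ^ 2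
      = ((n:ℝ)⁻¹ * ∑ i, f (Y i ω) - ∫ ω', (n:ℝ)⁻¹ * ∑ i, f (Y i ω') ∂ℙ) ^ 2
        + ((n:ℝ)⁻¹ * ∑ i, g (Y i ω) - ∫ ω', (n:ℝ)⁻¹ * ∑ i, g (Y i ω') ∂ℙ) ^ 2 := by
    intro ω
    rw [norm_sq_complex]
    congr 2
    · rw [Complex.sub_re, hre]
      congr 1
      have : ((n:ℂ)⁻¹) = (((n:ℝ)⁻¹ : ℝ) : ℂ) := by push_cast; ring
      rw [this, Complex.re_ofReal_mul]
      congr 1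
      rw [Complex.re_sum]
      exact Finset.sum_congr rfl (fun i _ => exp_I_re t _)
    · rw [Complex.sub_im, him]
      congr 1
      have : ((n:ℂ)⁻¹) = (((n:ℝ)⁻¹ : ℝ) : ℂ) := by push_cast; ring
      rw [this, Complex.im_ofReal_mul]
      congr 1
      rw [Complex.im_sum]
      exact Finset.sum_congr rfl (fun i _ => exp_I_im t _)
  calc ∫ ω, ‖(n:ℂ)⁻¹ * (∑ i, Complex.exp (Complex.I * t * Y i ω))
        - ∫ ω', Complex.exp (Complex.I * t * Y ⟨0, hn⟩ ω') ∂ℙ‖ ^ 2 ∂ℙ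
      = (∫ ω, ((n:ℝ)⁻¹ * ∑ i, f (Y i ω) - ∫ ω', (n:ℝ)⁻¹ * ∑ i, f (Y i ω') ∂ℙ) ^ 2 ∂ℙ)
        + (∫ ω, ((n:ℝ)⁻¹ * ∑ i, g (Y i ω) - ∫ ω', (n:ℝ)⁻¹ * ∑ i, g (Y i ω') ∂ℙ) ^ 2 ∂ℙ) := by
        rw [← integral_add]
        · exact integral_congr_ae (ae_of_all _ (fun ω => hpt ω))
        · refine bdd_integrable ?_ (C := 4) (fun ω => ?_)
          · exact (((measurable_const.mul (Finset.measurable_sum _ (fun i _ => hf.comp (hmeas i)))).sub measurable_const).pow_const 2).aestronglyMeasurable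
          · rw [abs_pow, sq_abs]
            have h1 : |(n:ℝ)⁻¹ * ∑ i, f (Y i ω)| ≤ 1 := by
              rw [abs_mul]
              calc |(n:ℝ)⁻¹| * |∑ i, f (Y i ω)| ≤ (n:ℝ)⁻¹ * (n:ℝ) := by
                    refine mul_le_mul (le_of_eq (abs_of_nonneg (by positivity))) ?_ (abs_nonneg _) (by positivity)
                    calc |∑ i, f (Y i ω)| ≤ ∑ i, |f (Y i ω)| := Finset.abs_sum_le_sum_abs _ _
                      _ ≤ ∑ _i : Fin n, (1:ℝ) := Finset.sum_le_sum (fun i _ => hfb _)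
                      _ = (n:ℝ) := by simp
                _ = 1 := inv_mul_cancel₀ (by exact_mod_cast Nat.one_le_iff_ne_zero.mp hn)
            have h2 : |∫ ω', (n:ℝ)⁻¹ * ∑ i, f (Y i ω') ∂ℙ| ≤ 1 := by
              rw [← hre]
              calc |(∫ ω', Complex.exp (Complex.I * t * Y ⟨0, hn⟩ ω') ∂ℙ).re|
                  ≤ ‖∫ ω', Complex.exp (Complex.I * t * Y ⟨0, hn⟩ ω') ∂ℙ‖ := Complex.abs_re_le_norm _
                _ ≤ ∫ ω', ‖Complex.exp (Complex.I * t * Y ⟨0, hn⟩ ω')‖ ∂ℙ := norm_integral_le_integral_norm _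
                _ ≤ 1 := by
                    have : ∀ ω', ‖Complex.exp (Complex.I * t * Y ⟨0, hn⟩ ω')‖ = 1 := by
                      intro ω'; rw [Complex.norm_exp]; simp
                    simp only [this]
                    simp
            rcases abs_le.mp h1 with ⟨h1a, h1b⟩
            rcases abs_le.mp h2 with ⟨h2a, h2b⟩
            nlinarith
        · refine bdd_integrable ?_ (C := 4) (fun ω => ?_)
          · exact (((measurable_const.mul (Finset.measurable_sum _ (fun i _ => hg.comp (hmeas i)))).sub measurable_const).pow_const 2).aestronglyMeasurable
          · rw [abs_pow, sq_abs]
            have h1 : |(n:ℝ)⁻¹ * ∑ i, g (Y i ω)| ≤ 1 := by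
              rw [abs_mul]
              calc |(n:ℝ)⁻¹| * |∑ i, g (Y i ω)| ≤ (n:ℝ)⁻¹ * (n:ℝ) := by
                    refine mul_le_mul (le_of_eq (abs_of_nonneg (by positivity))) ?_ (abs_nonneg _) (by positivity)
                    calc |∑ i, g (Y i ω)| ≤ ∑ i, |g (Y i ω)| := Finset.abs_sum_le_sum_abs _ _
                      _ ≤ ∑ _i : Fin n, (1:ℝ) := Finset.sum_le_sum (fun i _ => hgb _)
                      _ = (n:ℝ) := by simp
                _ = 1 := inv_mul_cancel₀ (by exact_mod_cast Nat.one_le_iff_ne_zero.mp hn)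
            have h2 : |∫ ω', (n:ℝ)⁻¹ * ∑ i, g (Y i ω') ∂ℙ| ≤ 1 := by
              rw [← him]
              calc |(∫ ω', Complex.exp (Complex.I * t * Y ⟨0, hn⟩ ω') ∂ℙ).im|
                  ≤ ‖∫ ω', Complex.exp (Complex.I * t * Y ⟨0, hn⟩ ω') ∂ℙ‖ := Complex.abs_im_le_norm _
                _ ≤ ∫ ω', ‖Complex.exp (Complex.I * t * Y ⟨0, hn⟩ ω')‖ ∂ℙ := norm_integral_le_integral_norm _
                _ ≤ 1 := by
                    have : ∀ ω', ‖Complex.exp (Complex.I * t * Y ⟨0, hn⟩ ω')‖ = 1 := by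
                      intro ω'; rw [Complex.norm_exp]; simp
                    simp only [this]
                    simp
            rcases abs_le.mp h1 with ⟨h1a, h1b⟩
            rcases abs_le.mp h2 with ⟨h2a, h2b⟩
            nlinarith
    _ ≤ (n:ℝ)⁻¹ := avg_var_le n hn Y hmeas hindep f g hf hg hfb hgb hfg

lemma cs_bound {Ω : Type*} [MeasureSpace Ω] [IsProbabilityMeasure (ℙ : Measure Ω)]
    {u v : Ω → ℝ} (hu : AEStronglyMeasurable u ℙ) (hv : AEStronglyMeasurable v ℙ)
    (hu0 : ∀ ω, 0 ≤ u ω) (hv0 : ∀ ω, 0 ≤ v ω)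
    (hub : ∀ ω, u ω ≤ 2) (hvb : ∀ ω, v ω ≤ 2)
    {c : ℝ} (hc : 0 ≤ c)
    (hu2 : ∫ ω, u ω ^ 2 ∂ℙ ≤ c) (hv2 : ∫ ω, v ω ^ 2 ∂ℙ ≤ c) :
    ∫ ω, u ω * v ω ∂ℙ ≤ c := by
  have hpq : Real.HolderConjugate 2 2 := Real.HolderConjugate.two_two
  have h2 : ENNReal.ofReal (2:ℝ) = 2 := by norm_num
  have huLp : MemLp u (ENNReal.ofReal (2:ℝ)) ℙ := by
    rw [h2]
    exact bdd_memLp hu (C := 2) (fun ω => by rw [abs_of_nonneg (hu0 ω)]; exact hub ω)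
  have hvLp : MemLp v (ENNReal.ofReal (2:ℝ)) ℙ := by
    rw [h2]
    exact bdd_memLp hv (C := 2) (fun ω => by rw [abs_of_nonneg (hv0 ω)]; exact hvb ω)
  have key := integral_mul_le_Lp_mul_Lq_of_nonneg hpq (ae_of_all _ hu0) (ae_of_all _ hv0) huLp hvLp
  simp_rw [Real.rpow_two] at key
  have h1 : (∫ ω, u ω ^ 2 ∂ℙ) ^ ((1:ℝ)/2) ≤ c ^ ((1:ℝ)/2) :=
    Real.rpow_le_rpow (integral_nonneg (fun ω => sq_nonneg _)) hu2 (by norm_num)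
  have h1' : (∫ ω, v ω ^ 2 ∂ℙ) ^ ((1:ℝ)/2) ≤ c ^ ((1:ℝ)/2) :=
    Real.rpow_le_rpow (integral_nonneg (fun ω => sq_nonneg _)) hv2 (by norm_num)
  calc ∫ ω, u ω * v ω ∂ℙ ≤ (∫ ω, u ω ^ 2 ∂ℙ) ^ ((1:ℝ)/2) * (∫ ω, v ω ^ 2 ∂ℙ) ^ ((1:ℝ)/2) := key
    _ ≤ c ^ ((1:ℝ)/2) * c ^ ((1:ℝ)/2) := by
        refine mul_le_mul h1 h1' (Real.rpow_nonneg (integral_nonneg (fun ω => sq_nonneg _)) _)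
          (Real.rpow_nonneg hc _)
    _ = c := by rw [← Real.sqrt_eq_rpow, Real.mul_self_sqrt hc]

lemma norm_exp_I_mul (t y : ℝ) : ‖Complex.exp (Complex.I * t * y)‖ = 1 := by
  rw [Complex.norm_exp]; simp

lemma norm_exp_neg_I_mul (t x : ℝ) : ‖Complex.exp (-(Complex.I * t * x))‖ = 1 := by
  rw [Complex.norm_exp]; simp
set_option maxHeartbeats 1000000 in
/-- For i.i.d. `Y₁, …, Y_n`, continuous nowhere-vanishing `φ_ε`,
integrable `K` with Fourier transform `φ_K`, `h > 0`, and `t ↦ t φ_K(th)/φ_ε(t)`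
integrable, the derivative of the deconvolution density estimator
`D̂(x) = (2π)⁻¹ ∫ (−it) exp(−itx) φ_K(th) φ̂_Y(t)/φ_ε(t) dt` satisfies
`E[sup_x |D̂(x) − E D̂(x)|²] ≤ (2π)⁻² n⁻¹ (∫ |t| |φ_K(th)|/|φ_ε(t)| dt)²`. -/
theorem stmt_10 {Ω : Type*} [MeasureSpace Ω] [IsProbabilityMeasure (ℙ : Measure Ω)]
    (n : ℕ) (hn : 1 ≤ n) (Y : Fin n → Ω → ℝ)
    (hmeas : ∀ i, Measurable (Y i))
    (hindep : iIndepFun Y ℙ)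
    (hident : ∀ i j, IdentDistrib (Y i) (Y j) ℙ ℙ)
    (K : ℝ → ℝ) (hK : Integrable K)
    (φK : ℝ → ℂ) (hφK : ∀ t : ℝ, φK t = ∫ x : ℝ, Complex.exp (Complex.I * t * x) * K x)
    (φε : ℝ → ℂ) (hφεc : Continuous φε) (hφε0 : ∀ t, φε t ≠ 0)
    (h : ℝ) (hh : 0 < h)
    (hint : Integrable (fun t : ℝ => (t : ℂ) * φK (t * h) / φε t))
    (Dhat : Ω → ℝ → ℂ)
    (hDhat : ∀ ω x, Dhat ω x =
      ((2 * Real.pi : ℝ) : ℂ)⁻¹ *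
        ∫ t : ℝ, (-(Complex.I * t)) * Complex.exp (-(Complex.I * t * x)) * φK (t * h) *
          ((n : ℂ)⁻¹ * ∑ i, Complex.exp (Complex.I * t * Y i ω)) / φε t)
    (ED : ℝ → ℂ)
    (hED : ∀ x, ED x =
      ((2 * Real.pi : ℝ) : ℂ)⁻¹ *
        ∫ t : ℝ, (-(Complex.I * t)) * Complex.exp (-(Complex.I * t * x)) * φK (t * h) *
          (∫ ω, Complex.exp (Complex.I * t * Y ⟨0, hn⟩ ω) ∂ℙ) / φε t) :
    (∫ ω, (⨆ x : ℝ, ‖Dhat ω x - ED x‖ ^ 2) ∂ℙ)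
      ≤ ((2 * Real.pi) ^ 2)⁻¹ * (n : ℝ)⁻¹ * (∫ t : ℝ, |t| * ‖φK (t * h)‖ / ‖φε t‖) ^ 2 := by
  have hπ : (0:ℝ) < 2 * Real.pi := by positivity
  have hn0 : (0:ℝ) < (n:ℝ) := by exact_mod_cast hn
  have hnne : (n:ℝ) ≠ 0 := ne_of_gt hn0
  set μc : ℝ → ℂ := fun t => ∫ ω', Complex.exp (Complex.I * t * Y ⟨0, hn⟩ ω') ∂ℙ with hμcdef
  set Δ : Ω → ℝ → ℂ :=
    fun ω t => (n:ℂ)⁻¹ * (∑ i, Complex.exp (Complex.I * t * Y i ω)) - μc t with hΔdef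
  set a : ℝ → ℝ := fun t => |t| * ‖φK (t * h)‖ / ‖φε t‖ with hadef
  -- basic bounds
  have hS_bd : ∀ (ω : Ω) (t : ℝ), ‖(n:ℂ)⁻¹ * (∑ i, Complex.exp (Complex.I * t * Y i ω))‖ ≤ 1 := by
    intro ω t
    rw [norm_mul, norm_inv]
    calc ‖(n:ℂ)‖⁻¹ * ‖∑ i, Complex.exp (Complex.I * t * Y i ω)‖
        ≤ ‖(n:ℂ)‖⁻¹ * (n:ℝ) := by
          refine mul_le_mul_of_nonneg_left ?_ (by positivity)
          calc ‖∑ i, Complex.exp (Complex.I * t * Y i ω)‖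
              ≤ ∑ i : Fin n, ‖Complex.exp (Complex.I * t * Y i ω)‖ := norm_sum_le _ _
            _ = (n:ℝ) := by simp only [norm_exp_I_mul]; simp
      _ = 1 := by rw [Complex.norm_natCast]; exact inv_mul_cancel₀ hnne
  have hμ_bd : ∀ t, ‖μc t‖ ≤ 1 := by
    intro t
    calc ‖μc t‖ ≤ ∫ ω', ‖Complex.exp (Complex.I * t * Y ⟨0, hn⟩ ω')‖ ∂ℙ :=
          norm_integral_le_integral_norm _
      _ = 1 := by simp only [norm_exp_I_mul]; simp
  have hΔ_bd : ∀ (ω : Ω) (t : ℝ), ‖Δ ω t‖ ≤ 2 := by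
    intro ω t
    calc ‖Δ ω t‖ ≤ ‖(n:ℂ)⁻¹ * (∑ i, Complex.exp (Complex.I * t * Y i ω))‖ + ‖μc t‖ :=
          norm_sub_le _ _
      _ ≤ 1 + 1 := add_le_add (hS_bd ω t) (hμ_bd t)
      _ = 2 := by norm_num
  -- a is the norm of the integrand of hint
  have ha_eq : ∀ t : ℝ, ‖(t : ℂ) * φK (t * h) / φε t‖ = a t := by
    intro t
    rw [norm_div, norm_mul, Complex.norm_real, Real.norm_eq_abs]
  have ha_int : Integrable a := by
    have : a = fun t : ℝ => ‖(t : ℂ) * φK (t * h) / φε t‖ := funext fun t => (ha_eq t).symm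
    rw [this]
    exact hint.norm
  have ha_nonneg : ∀ t, 0 ≤ a t := fun t => by positivity
  have ha_meas : AEStronglyMeasurable a volume := ha_int.1
  -- measurability facts
  have hμc_meas : StronglyMeasurable μc := by
    have hm : Measurable (fun p : ℝ × Ω => Complex.exp (Complex.I * p.1 * (Y ⟨0, hn⟩ p.2 : ℝ))) :=
      Complex.measurable_exp.comp (((measurable_const.mul
        (Complex.measurable_ofReal.comp measurable_fst))).mul
        (Complex.measurable_ofReal.comp ((hmeas _).comp measurable_snd)))
    exact hm.stronglyMeasurable.integral_prod_right'
  have hΔ_joint : Measurable (fun p : Ω × ℝ => Δ p.1 p.2) := by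
    apply Measurable.sub
    · apply Measurable.const_mul
      apply Finset.measurable_sum
      intro i _
      exact Complex.measurable_exp.comp (((measurable_const.mul
        (Complex.measurable_ofReal.comp measurable_snd))).mul
        (Complex.measurable_ofReal.comp ((hmeas i).comp measurable_fst)))
    · exact hμc_meas.measurable.comp measurable_snd
  have hΔ_meas_t : ∀ ω, Measurable (fun t => Δ ω t) := by
    intro ω
    simp only [hΔdef]
    apply Measurable.sub
    · apply Measurable.const_mul
      apply Finset.measurable_sum
      intro i _
      exact Complex.measurable_exp.comp ((measurable_const.mul
        Complex.measurable_ofReal).mul measurable_const)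
    · exact hμc_meas.measurable
  have hΔ_meas_ω : ∀ t, Measurable (fun ω => Δ ω t) := by
    intro t
    simp only [hΔdef]
    apply Measurable.sub
    · apply Measurable.const_mul
      apply Finset.measurable_sum
      intro i _
      exact Complex.measurable_exp.comp (measurable_const.mul
        (Complex.measurable_ofReal.comp (hmeas i)))
    · exact measurable_const
  -- F and G
  set F : Ω → ℝ → ℝ := fun ω t => ‖Δ ω t‖ * a t with hFdef
  set G : Ω → ℝ := fun ω => ∫ t, F ω t with hGdef
  have hF_int : ∀ ω, Integrable (F ω) := by
    intro ω
    exact Integrable.bdd_mul (c := 2) ha_int ((hΔ_meas_t ω).norm.aestronglyMeasurable)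
      (ae_of_all _ (fun t => by simpa using hΔ_bd ω t))
  have hF_nonneg : ∀ ω t, 0 ≤ F ω t := fun ω t => mul_nonneg (norm_nonneg _) (ha_nonneg t)
  have hF_le : ∀ ω t, F ω t ≤ 2 * a t := fun ω t =>
    mul_le_mul_of_nonneg_right (hΔ_bd ω t) (ha_nonneg t)
  have hG_nonneg : ∀ ω, 0 ≤ G ω := fun ω => integral_nonneg (hF_nonneg ω)
  have hG_bd : ∀ ω, G ω ≤ 2 * ∫ t, a t := by
    intro ω
    calc G ω ≤ ∫ t, 2 * a t := integral_mono (hF_int ω) (ha_int.const_mul 2)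
          (fun t => hF_le ω t)
      _ = 2 * ∫ t, a t := integral_const_mul _ _
  -- integrability of the two integrands
  have hMint : ∀ (ω : Ω) (x : ℝ), Integrable (fun t : ℝ =>
      (-(Complex.I * t)) * Complex.exp (-(Complex.I * t * x)) * φK (t * h) *
        ((n : ℂ)⁻¹ * ∑ i, Complex.exp (Complex.I * t * Y i ω)) / φε t) := by
    intro ω x
    have heq : (fun t : ℝ =>
        (-(Complex.I * t)) * Complex.exp (-(Complex.I * t * x)) * φK (t * h) *
          ((n : ℂ)⁻¹ * ∑ i, Complex.exp (Complex.I * t * Y i ω)) / φε t)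
        = fun t : ℝ => ((-Complex.I) * Complex.exp (-(Complex.I * t * x)) *
          ((n : ℂ)⁻¹ * ∑ i, Complex.exp (Complex.I * t * Y i ω))) *
          ((t : ℂ) * φK (t * h) / φε t) := by
      funext t
      rw [div_eq_mul_inv, div_eq_mul_inv]
      ring
    rw [heq]
    refine Integrable.bdd_mul (c := 1) hint ?_ (ae_of_all _ (fun t => ?_))
    · apply Measurable.aestronglyMeasurable
      apply Measurable.mul
      · fun_prop
      · apply Measurable.const_mul
        apply Finset.measurable_sum
        intro i _
        fun_prop
    · rw [norm_mul, norm_mul, norm_neg, Complex.norm_I, one_mul, norm_exp_neg_I_mul, one_mul]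
      exact hS_bd ω t
  have hEint : ∀ x : ℝ, Integrable (fun t : ℝ =>
      (-(Complex.I * t)) * Complex.exp (-(Complex.I * t * x)) * φK (t * h) * μc t / φε t) := by
    intro x
    have heq : (fun t : ℝ =>
        (-(Complex.I * t)) * Complex.exp (-(Complex.I * t * x)) * φK (t * h) * μc t / φε t)
        = fun t : ℝ => ((-Complex.I) * Complex.exp (-(Complex.I * t * x)) * μc t) *
          ((t : ℂ) * φK (t * h) / φε t) := by
      funext t
      rw [div_eq_mul_inv, div_eq_mul_inv]
      ring
    rw [heq]
    refine Integrable.bdd_mul (c := 1) hint ?_ (ae_of_all _ (fun t => ?_))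
    · apply Measurable.aestronglyMeasurable
      apply Measurable.mul
      · fun_prop
      · exact hμc_meas.measurable
    · rw [norm_mul, norm_mul, norm_neg, Complex.norm_I, one_mul, norm_exp_neg_I_mul, one_mul]
      exact hμ_bd t
  -- difference formula
  have hsub : ∀ (ω : Ω) (x : ℝ), Dhat ω x - ED x = ((2 * Real.pi : ℝ) : ℂ)⁻¹ *
      ∫ t : ℝ, (-(Complex.I * t)) * Complex.exp (-(Complex.I * t * x)) * φK (t * h) *
        (Δ ω t) / φε t := by
    intro ω x
    rw [hDhat, hED, ← mul_sub, ← integral_sub (hMint ω x) (hEint x)]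
    congr 1
    apply integral_congr_ae
    filter_upwards with t
    rw [div_sub_div_same, ← mul_sub]
  -- pointwise norm of the integrand
  have hnorm_pt : ∀ (ω : Ω) (x t : ℝ),
      ‖(-(Complex.I * t)) * Complex.exp (-(Complex.I * t * x)) * φK (t * h) *
        (Δ ω t) / φε t‖ = F ω t := by
    intro ω x t
    rw [norm_div, norm_mul, norm_mul, norm_mul, norm_neg, norm_mul, Complex.norm_I, one_mul,
      norm_exp_neg_I_mul, Complex.norm_real, Real.norm_eq_abs, hFdef, hadef]
    ring
  -- the key norm bound
  have hDE : ∀ (ω : Ω) (x : ℝ), ‖Dhat ω x - ED x‖ ≤ (2 * Real.pi)⁻¹ * G ω := by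
    intro ω x
    rw [hsub ω x, norm_mul]
    have h1 : ‖((2 * Real.pi : ℝ) : ℂ)⁻¹‖ = (2 * Real.pi)⁻¹ := by
      rw [norm_inv, Complex.norm_real, Real.norm_eq_abs, abs_of_pos hπ]
    rw [h1]
    refine mul_le_mul_of_nonneg_left ?_ (by positivity)
    calc ‖∫ t : ℝ, (-(Complex.I * t)) * Complex.exp (-(Complex.I * t * x)) * φK (t * h) *
          (Δ ω t) / φε t‖
        ≤ ∫ t : ℝ, ‖(-(Complex.I * t)) * Complex.exp (-(Complex.I * t * x)) * φK (t * h) *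
          (Δ ω t) / φε t‖ := norm_integral_le_integral_norm _
      _ = G ω := by
          refine integral_congr_ae (ae_of_all _ (fun t => ?_))
          exact hnorm_pt ω x t
  -- sup bound
  have hsup : ∀ ω, (⨆ x : ℝ, ‖Dhat ω x - ED x‖ ^ 2) ≤ ((2 * Real.pi) ^ 2)⁻¹ * G ω ^ 2 := by
    intro ω
    refine Real.iSup_le (fun x => ?_) (by positivity)
    calc ‖Dhat ω x - ED x‖ ^ 2 ≤ ((2 * Real.pi)⁻¹ * G ω) ^ 2 :=
          pow_le_pow_left₀ (norm_nonneg _) (hDE ω x) 2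
      _ = ((2 * Real.pi) ^ 2)⁻¹ * G ω ^ 2 := by rw [mul_pow, inv_pow]
  -- G is measurable (via joint measurability)
  have hF_joint : AEStronglyMeasurable (fun p : Ω × ℝ => F p.1 p.2) ((ℙ : Measure Ω).prod volume) := by
    apply AEStronglyMeasurable.mul
    · exact hΔ_joint.norm.aestronglyMeasurable
    · exact ha_meas.comp_quasiMeasurePreserving MeasureTheory.Measure.quasiMeasurePreserving_snd
  have hG_meas : AEStronglyMeasurable G ℙ := hF_joint.integral_prod_right'
  have hB_int : Integrable (fun ω => ((2 * Real.pi) ^ 2)⁻¹ * G ω ^ 2) ℙ := by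
    refine (integrable_const (((2 * Real.pi) ^ 2)⁻¹ * (2 * ∫ t, a t) ^ 2)).mono'
      (((hG_meas.pow 2).const_mul _)) (ae_of_all _ (fun ω => ?_))
    rw [Real.norm_eq_abs, abs_of_nonneg (by positivity)]
    refine mul_le_mul_of_nonneg_left ?_ (by positivity)
    exact pow_le_pow_left₀ (hG_nonneg ω) (hG_bd ω) 2
  -- variance bound for each t
  have hV : ∀ t : ℝ, ∫ ω, ‖Δ ω t‖ ^ 2 ∂ℙ ≤ (n:ℝ)⁻¹ := by
    intro t
    simp only [hΔdef, hμcdef]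
    exact empCF_var_le n hn Y hmeas hindep hident t
  have hCSpair : ∀ s t : ℝ, ∫ ω, ‖Δ ω s‖ * ‖Δ ω t‖ ∂ℙ ≤ (n:ℝ)⁻¹ := by
    intro s t
    refine cs_bound ((hΔ_meas_ω s).norm.aestronglyMeasurable)
      ((hΔ_meas_ω t).norm.aestronglyMeasurable)
      (fun ω => norm_nonneg _) (fun ω => norm_nonneg _)
      (fun ω => hΔ_bd ω s) (fun ω => hΔ_bd ω t)
      (by positivity) (hV s) (hV t)
  -- joint measurability and integrability on Ω × (ℝ × ℝ)
  have hΔ_gen : ∀ {v : Ω × (ℝ × ℝ) → ℝ},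
      Measurable v → Measurable (fun z : Ω × (ℝ × ℝ) => Δ z.1 (v z)) := by
    intro v hv
    have hu : Measurable (fun z : Ω × (ℝ × ℝ) => z.1) := measurable_fst
    simp only [hΔdef]
    apply Measurable.sub
    · apply Measurable.const_mul
      apply Finset.measurable_sum
      intro i _
      exact Complex.measurable_exp.comp ((measurable_const.mul
        (Complex.measurable_ofReal.comp hv)).mul
        (Complex.measurable_ofReal.comp ((hmeas i).comp hu)))
    · exact hμc_meas.measurable.comp hv
  have hqmp1 : Measure.QuasiMeasurePreserving (fun p : Ω × (ℝ × ℝ) => p.2.1)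
      ((ℙ : Measure Ω).prod (volume.prod volume)) volume :=
    MeasureTheory.Measure.quasiMeasurePreserving_fst.comp
      MeasureTheory.Measure.quasiMeasurePreserving_snd
  have hqmp2 : Measure.QuasiMeasurePreserving (fun p : Ω × (ℝ × ℝ) => p.2.2)
      ((ℙ : Measure Ω).prod (volume.prod volume)) volume :=
    MeasureTheory.Measure.quasiMeasurePreserving_snd.comp
      MeasureTheory.Measure.quasiMeasurePreserving_snd
  have hH_meas : AEStronglyMeasurable (fun p : Ω × (ℝ × ℝ) => F p.1 p.2.1 * F p.1 p.2.2)
      ((ℙ : Measure Ω).prod (volume.prod volume)) := by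
    simp only [hFdef]
    refine AEStronglyMeasurable.mul (AEStronglyMeasurable.mul ?_ ?_)
      (AEStronglyMeasurable.mul ?_ ?_)
    · exact (hΔ_gen (measurable_fst.comp measurable_snd)).norm.aestronglyMeasurable
    · exact ha_meas.comp_quasiMeasurePreserving hqmp1
    · exact (hΔ_gen (measurable_snd.comp measurable_snd)).norm.aestronglyMeasurable
    · exact ha_meas.comp_quasiMeasurePreserving hqmp2
  have hbound : Integrable (fun p : Ω × (ℝ × ℝ) => (1:ℝ) * ((2 * a p.2.1) * (2 * a p.2.2)))
      ((ℙ : Measure Ω).prod (volume.prod volume)) :=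
    (integrable_const (1:ℝ)).mul_prod ((ha_int.const_mul 2).mul_prod (ha_int.const_mul 2))
  have hH_int : Integrable (fun p : Ω × (ℝ × ℝ) => F p.1 p.2.1 * F p.1 p.2.2)
      ((ℙ : Measure Ω).prod (volume.prod volume)) := by
    refine hbound.mono' hH_meas (ae_of_all _ (fun p => ?_))
    rw [Real.norm_eq_abs, abs_of_nonneg (mul_nonneg (hF_nonneg _ _) (hF_nonneg _ _)), one_mul]
    exact mul_le_mul (hF_le _ _) (hF_le _ _) (hF_nonneg _ _) (by positivity)
  have hGsq : ∀ ω, G ω ^ 2 = ∫ q : ℝ × ℝ, F ω q.1 * F ω q.2 ∂(volume.prod volume) := by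
    intro ω
    rw [sq, ← integral_prod_mul (f := F ω) (g := F ω)]
  have hswap : ∫ ω, ∫ q : ℝ × ℝ, F ω q.1 * F ω q.2 ∂(volume.prod volume) ∂ℙ
      = ∫ q : ℝ × ℝ, ∫ ω, F ω q.1 * F ω q.2 ∂ℙ ∂(volume.prod volume) :=
    integral_integral_swap (f := fun ω (q : ℝ × ℝ) => F ω q.1 * F ω q.2) hH_int
  have hinner : ∀ q : ℝ × ℝ, ∫ ω, F ω q.1 * F ω q.2 ∂ℙ ≤ (a q.1 * a q.2) * (n:ℝ)⁻¹ := by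
    intro q
    have heq : (fun ω => F ω q.1 * F ω q.2)
        = fun ω => (a q.1 * a q.2) * (‖Δ ω q.1‖ * ‖Δ ω q.2‖) := by
      funext ω; simp only [hFdef]; ring
    rw [heq, integral_const_mul]
    exact mul_le_mul_of_nonneg_left (hCSpair q.1 q.2) (by positivity)
  have hIPL : Integrable (fun q : ℝ × ℝ => ∫ ω, F ω q.1 * F ω q.2 ∂ℙ) (volume.prod volume) :=
    hH_int.integral_prod_right
  have hRHSint : Integrable (fun q : ℝ × ℝ => (a q.1 * a q.2) * (n:ℝ)⁻¹) (volume.prod volume) :=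
    (ha_int.mul_prod ha_int).mul_const _
  have hstep3 : ∫ ω, G ω ^ 2 ∂ℙ ≤ (n:ℝ)⁻¹ * (∫ t, a t) ^ 2 := by
    calc ∫ ω, G ω ^ 2 ∂ℙ
        = ∫ ω, ∫ q : ℝ × ℝ, F ω q.1 * F ω q.2 ∂(volume.prod volume) ∂ℙ :=
          integral_congr_ae (ae_of_all _ hGsq)
      _ = ∫ q : ℝ × ℝ, ∫ ω, F ω q.1 * F ω q.2 ∂ℙ ∂(volume.prod volume) := hswap
      _ ≤ ∫ q : ℝ × ℝ, (a q.1 * a q.2) * (n:ℝ)⁻¹ ∂(volume.prod volume) :=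
          integral_mono hIPL hRHSint hinner
      _ = (n:ℝ)⁻¹ * (∫ t, a t) ^ 2 := by
          rw [integral_mul_const, integral_prod_mul, sq]; ring
  calc ∫ ω, (⨆ x : ℝ, ‖Dhat ω x - ED x‖ ^ 2) ∂ℙ
      ≤ ∫ ω, ((2 * Real.pi) ^ 2)⁻¹ * G ω ^ 2 ∂ℙ :=
        integral_mono_of_nonneg
          (ae_of_all _ (fun ω => Real.iSup_nonneg (fun x => by positivity)))
          hB_int (ae_of_all _ hsup)
    _ = ((2 * Real.pi) ^ 2)⁻¹ * ∫ ω, G ω ^ 2 ∂ℙ := integral_const_mul _ _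
    _ ≤ ((2 * Real.pi) ^ 2)⁻¹ * ((n:ℝ)⁻¹ * (∫ t, a t) ^ 2) :=
        mul_le_mul_of_nonneg_left hstep3 (by positivity)
    _ = ((2 * Real.pi) ^ 2)⁻¹ * (n : ℝ)⁻¹ * (∫ t, a t) ^ 2 := by ring
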